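/- For the linear graph L_n with n = 2k or n = 2k−1, and 1 ≤ i < j ≤ k, there exists M > 0 such that for all λ > M, I_i(λ) > I_j(λ). -/
import Mathlib


/-- Importance of vertex `j` in the linear graph `L_n` under the PWP method. -/
noncomputable def impL (n j : ℕ) (lam : ℝ) : ℝ :=
  (1 / (Real.exp lam - 1)) *
    ((∑ i ∈ Finset.Icc 1 (j - 1), lam ^ (j - i) / (Nat.factorial (j - i))) +
     (∑ i ∈ Finset.Icc (j + 1) n, lam ^ (i - j) / (Nat.factorial (i - j))))

lemma reindex1 (j : ℕ) (f : ℕ → ℝ) :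
    ∑ i ∈ Finset.Icc 1 (j-1), f (j - i) = ∑ m ∈ Finset.Icc 1 (j-1), f m := by
  refine Finset.sum_nbij' (fun m => j - m) (fun m => j - m) ?_ ?_ ?_ ?_ ?_ <;>
    simp only [Finset.mem_Icc] <;> intros a ha <;>
    first | omega | (congr 1; omega) | trivial

lemma reindex2 (n j : ℕ) (f : ℕ → ℝ) :
    ∑ i ∈ Finset.Icc (j+1) n, f (i - j) = ∑ m ∈ Finset.Icc 1 (n-j), f m := by
  refine Finset.sum_nbij' (fun m => m - j) (fun m => m + j) ?_ ?_ ?_ ?_ ?_ <;>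
    simp only [Finset.mem_Icc] <;> intros a ha <;>
    first | omega | (congr 1; omega) | trivial

lemma impL_eq (n j : ℕ) (lam : ℝ) :
    impL n j lam = (1 / (Real.exp lam - 1)) *
      ((∑ m ∈ Finset.Icc 1 (j-1), lam ^ m / (Nat.factorial m)) +
       (∑ m ∈ Finset.Icc 1 (n-j), lam ^ m / (Nat.factorial m))) := by
  unfold impL
  rw [reindex1 j (fun m => lam ^ m / (Nat.factorial m)),
      reindex2 n j (fun m => lam ^ m / (Nat.factorial m))]

lemma split_sum (a b : ℕ) (h : a ≤ b) (f : ℕ → ℝ) :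
    ∑ m ∈ Finset.Icc 1 b, f m =
      (∑ m ∈ Finset.Icc 1 a, f m) + ∑ m ∈ Finset.Ioc a b, f m := by
  rw [show (1:ℕ) = 0 + 1 from rfl, Finset.Icc_add_one_left_eq_Ioc, Finset.Icc_add_one_left_eq_Ioc,
    Finset.sum_Ioc_consecutive _ (Nat.zero_le a) h]

/-- For large ,  whenever , where  or . -/
theorem stmt5 (n k i j : ℕ) (hk : 2 ≤ k) (hn : n = 2 * k ∨ n = 2 * k - 1)
    (hi : 1 ≤ i) (hij : i < j) (hjk : j ≤ k) :
    ∃ M > (0:ℝ), ∀ lam : ℝ, M < lam → impL n i lam > impL n j lam := by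
  have hji : j - 1 < n - i := by omega
  have hnji : n - j < n - i := by omega
  refine ⟨(n : ℝ) * (Nat.factorial (n - i)) + 1, by positivity, fun lam hlam => ?_⟩
  have hl1 : (1:ℝ) < lam := by
    have h0 : (0:ℝ) ≤ (n : ℝ) * (Nat.factorial (n - i)) := by positivity
    linarith
  have hl0 : (0:ℝ) < lam := by linarith
  set f : ℕ → ℝ := fun m => lam ^ m / (Nat.factorial m) with hf
  have hfpos : ∀ m, 0 ≤ f m := fun m => by positivity
  rw [impL_eq, impL_eq]
  have hE : (0:ℝ) < Real.exp lam - 1 := by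
    have := Real.add_one_lt_exp (x := lam) (by linarith)
    linarith
  have hc : (0:ℝ) < 1 / (Real.exp lam - 1) := by positivity
  apply mul_lt_mul_of_pos_left _ hc
  have h1 : ∑ m ∈ Finset.Icc 1 (n-i), f m =
      (∑ m ∈ Finset.Icc 1 (n-j), f m) + ∑ m ∈ Finset.Ioc (n-j) (n-i), f m :=
    split_sum _ _ (by omega) f
  have h2 : ∑ m ∈ Finset.Icc 1 (j-1), f m =
      (∑ m ∈ Finset.Icc 1 (i-1), f m) + ∑ m ∈ Finset.Ioc (i-1) (j-1), f m :=
    split_sum _ _ (by omega) f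
  show _ < _
  rw [h1, h2]
  have key : ∑ m ∈ Finset.Ioc (i-1) (j-1), f m < ∑ m ∈ Finset.Ioc (n-j) (n-i), f m := by
    have hT : f (n-i) ≤ ∑ m ∈ Finset.Ioc (n-j) (n-i), f m := by
      apply Finset.single_le_sum (fun m _ => hfpos m)
      simp [Finset.mem_Ioc, hnji]
    have hU : ∑ m ∈ Finset.Ioc (i-1) (j-1), f m ≤ (n : ℝ) * lam ^ (j-1) := by
      calc ∑ m ∈ Finset.Ioc (i-1) (j-1), f m
          ≤ ∑ m ∈ Finset.Ioc (i-1) (j-1), lam ^ (j-1) := by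
            apply Finset.sum_le_sum
            intro m hm
            simp only [Finset.mem_Ioc] at hm
            have h1 : lam ^ m ≤ lam ^ (j-1) := pow_le_pow_right₀ (le_of_lt hl1) hm.2
            have h2 : (1:ℝ) ≤ (Nat.factorial m : ℝ) := by
              exact_mod_cast Nat.one_le_iff_ne_zero.mpr (Nat.factorial_ne_zero m)
            calc f m = lam ^ m / (Nat.factorial m) := rfl
              _ ≤ lam ^ m / 1 := by
                  apply div_le_div_of_nonneg_left (by positivity) one_pos h2
              _ = lam ^ m := div_one _
              _ ≤ lam ^ (j-1) := h1
        _ = ((j - 1 - (i - 1) : ℕ) : ℝ) * lam ^ (j-1) := by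
            rw [Finset.sum_const, Nat.card_Ioc, nsmul_eq_mul]
        _ ≤ (n : ℝ) * lam ^ (j-1) := by
            apply mul_le_mul_of_nonneg_right _ (by positivity)
            exact_mod_cast (show j - 1 - (i - 1) ≤ n by omega)
    have hbig : (n : ℝ) * lam ^ (j-1) < f (n-i) := by
      have hd : n - i = (n - i - (j-1)) + (j-1) := by omega
      have hd1 : 1 ≤ n - i - (j-1) := by omega
      have hfact : (0:ℝ) < (Nat.factorial (n-i) : ℝ) := by positivity
      have hpow : lam ^ (n-i) = lam ^ (n - i - (j-1)) * lam ^ (j-1) := by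
        rw [← pow_add, ← hd]
      have hlam' : (n : ℝ) * (Nat.factorial (n-i)) < lam ^ (n - i - (j-1)) := by
        calc (n : ℝ) * (Nat.factorial (n-i)) < lam := by linarith
          _ = lam ^ 1 := (pow_one lam).symm
          _ ≤ lam ^ (n - i - (j-1)) := pow_le_pow_right₀ (le_of_lt hl1) hd1
      show (n : ℝ) * lam ^ (j-1) < lam ^ (n-i) / (Nat.factorial (n-i))
      rw [hpow, lt_div_iff₀ hfact]
      calc (n : ℝ) * lam ^ (j-1) * (Nat.factorial (n-i))
          = ((n : ℝ) * (Nat.factorial (n-i))) * lam ^ (j-1) := by ring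
        _ < lam ^ (n - i - (j-1)) * lam ^ (j-1) := by
            apply mul_lt_mul_of_pos_right hlam' (by positivity)
    linarith
  linarith
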